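/- Let M = (E, ρ) be a matroid and let Y ⊆ E be a subset of full rank (ρ(Y) = ρ(E)); set k = ρ(Y) and n = |Y|. Then the restriction M|Y is isomorphic to the uniform matroid U_n^k (equivalently, ρ(A) = min(|A|, k) for every A ⊆ Y) if and only if either Y is a basis of M, or both of the following conditions hold: (1) Y is a cyclic set of M, and (2) for every cyclic flat Z of M with ρ(Z) < k, the set Z ∩ Y is independent in M. -/

import Mathlib

open Finset

structure FinMatroid (α : Type*) [DecidableEq α] where
  E : Finset α
  rk : Finset α → ℕ
  rk_le_card : ∀ A, A ⊆ E → rk A ≤ A.card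
  rk_mono : ∀ A B, A ⊆ B → B ⊆ E → rk A ≤ rk B
  rk_submod : ∀ A B, A ⊆ E → B ⊆ E → rk (A ∪ B) + rk (A ∩ B) ≤ rk A + rk B

namespace FinMatroid

variable {α : Type*} [DecidableEq α]

/-- The closure operator `cl(A) = {e ∈ E : ρ(A ∪ {e}) = ρ(A)}`. -/
def cl (M : FinMatroid α) (A : Finset α) : Finset α :=
  M.E.filter fun e => M.rk (insert e A) = M.rk A

/-- The cyclic operator `cyc(A) = {e ∈ A : ρ(A − {e}) = ρ(A)}`. -/
def cyc (M : FinMatroid α) (A : Finset α) : Finset α :=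
  A.filter fun e => M.rk (A.erase e) = M.rk A

/-- A flat is a set fixed by the closure operator. -/
def IsFlat (M : FinMatroid α) (F : Finset α) : Prop :=
  F ⊆ M.E ∧ M.cl F = F

/-- A cyclic set is a set fixed by the cyclic operator. -/
def IsCyclic (M : FinMatroid α) (U : Finset α) : Prop :=
  U ⊆ M.E ∧ M.cyc U = U

/-- A cyclic flat is a set fixed by both the closure and the cyclic operators. -/
def IsCyclicFlat (M : FinMatroid α) (Z : Finset α) : Prop :=
  Z ⊆ M.E ∧ M.cl Z = Z ∧ M.cyc Z = Z

/-- The minor `M|Y/X`: restriction to `Y` followed by contraction of `X`. -/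
def minor (M : FinMatroid α) (X Y : Finset α) (hXY : X ⊆ Y) (hY : Y ⊆ M.E) :
    FinMatroid α where
  E := Y \ X
  rk A := M.rk (A ∪ X) - M.rk X
  rk_le_card := by
    intro A hA
    have hAE : A ⊆ M.E := fun a ha => hY (mem_sdiff.mp (hA ha)).1
    have hXE : X ⊆ M.E := hXY.trans hY
    have h1 := M.rk_submod A X hAE hXE
    have h2 := M.rk_le_card A hAE
    show M.rk (A ∪ X) - M.rk X ≤ A.card
    omega
  rk_mono := by
    intro A B hAB hB
    have hBE : B ⊆ M.E := fun a ha => hY (mem_sdiff.mp (hB ha)).1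
    have hBX : B ∪ X ⊆ M.E := union_subset hBE (hXY.trans hY)
    have := M.rk_mono (A ∪ X) (B ∪ X) (union_subset_union hAB Subset.rfl) hBX
    show M.rk (A ∪ X) - M.rk X ≤ M.rk (B ∪ X) - M.rk X
    omega
  rk_submod := by
    intro A B hA hB
    have hAE : A ⊆ M.E := fun a ha => hY (mem_sdiff.mp (hA ha)).1
    have hBE : B ⊆ M.E := fun a ha => hY (mem_sdiff.mp (hB ha)).1
    have hXE : X ⊆ M.E := hXY.trans hY
    have hAX : A ∪ X ⊆ M.E := union_subset hAE hXE
    have hBX : B ∪ X ⊆ M.E := union_subset hBE hXE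
    have hsub := M.rk_submod (A ∪ X) (B ∪ X) hAX hBX
    have e1 : (A ∪ X) ∪ (B ∪ X) = (A ∪ B) ∪ X := by
      ext x; simp only [mem_union]; tauto
    have e2 : (A ∪ X) ∩ (B ∪ X) = (A ∩ B) ∪ X := by
      ext x; simp only [mem_union, mem_inter]; tauto
    rw [e1, e2] at hsub
    have h1 : M.rk X ≤ M.rk (A ∪ X) := M.rk_mono X _ subset_union_right hAX
    have h2 : M.rk X ≤ M.rk (B ∪ X) := M.rk_mono X _ subset_union_right hBX
    have hIX : (A ∩ B) ∪ X ⊆ M.E := union_subset (inter_subset_left.trans hAE) hXE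
    have hUX : (A ∪ B) ∪ X ⊆ M.E := union_subset (union_subset hAE hBE) hXE
    have h3 : M.rk X ≤ M.rk ((A ∩ B) ∪ X) := M.rk_mono X _ subset_union_right hIX
    have h4 : M.rk X ≤ M.rk ((A ∪ B) ∪ X) := M.rk_mono X _ subset_union_right hUX
    show M.rk ((A ∪ B) ∪ X) - M.rk X + (M.rk ((A ∩ B) ∪ X) - M.rk X) ≤
      (M.rk (A ∪ X) - M.rk X) + (M.rk (B ∪ X) - M.rk X)
    omega

/-- The restriction `M|Y`. -/
def restrict (M : FinMatroid α) (Y : Finset α) (hY : Y ⊆ M.E) : FinMatroid α where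
  E := Y
  rk := M.rk
  rk_le_card := fun A hA => M.rk_le_card A (hA.trans hY)
  rk_mono := fun A B hAB hB => M.rk_mono A B hAB (hB.trans hY)
  rk_submod := fun A B hA hB => M.rk_submod A B (hA.trans hY) (hB.trans hY)

/-- `M` is binary: it is the matroid of linear dependence of a family of
vectors over the field with two elements. -/
def IsBinary (M : FinMatroid α) : Prop :=
  ∃ (m : ℕ) (φ : α → (Fin m → ZMod 2)),
    ∀ A : Finset α, A ⊆ M.E →
      M.rk A = Module.finrank (ZMod 2) (Submodule.span (ZMod 2) (φ '' (A : Set α)))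

def Simple (M : FinMatroid α) : Prop :=
  (∀ e ∈ M.E, M.rk {e} = 1) ∧
    ∀ e ∈ M.E, ∀ f ∈ M.E, e ≠ f → M.rk ({e, f} : Finset α) = 2

def NoIsthmus (M : FinMatroid α) : Prop :=
  ∀ e ∈ M.E, M.rk (M.E.erase e) = M.rk M.E

def IsMinDist (M : FinMatroid α) (d : ℕ) : Prop :=
  (∃ X ⊆ M.E, M.rk (M.E \ X) < M.rk M.E ∧ X.card = d) ∧
    ∀ X ⊆ M.E, M.rk (M.E \ X) < M.rk M.E → d ≤ X.card

def IsAtomCF (M : FinMatroid α) (Z : Finset α) : Prop :=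
  M.IsCyclicFlat Z ∧ Z ≠ ∅ ∧ ¬ ∃ Z', M.IsCyclicFlat Z' ∧ ∅ ⊂ Z' ∧ Z' ⊂ Z

def IsCoatomCF (M : FinMatroid α) (Z : Finset α) : Prop :=
  M.IsCyclicFlat Z ∧ Z ⊂ M.E ∧ ¬ ∃ Z', M.IsCyclicFlat Z' ∧ Z ⊂ Z' ∧ Z' ⊂ M.E

def IsCircuit (M : FinMatroid α) (C : Finset α) : Prop :=
  C ⊆ M.E ∧ M.rk C < C.card ∧ ∀ D ⊂ C, M.rk D = D.card

end FinMatroid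

namespace FinMatroid

variable {α : Type*} [DecidableEq α] (M : FinMatroid α)

lemma rk_empty : M.rk ∅ = 0 :=
  Nat.le_zero.mp (by simpa using M.rk_le_card ∅ (empty_subset _))

lemma span_aux (A : Finset α) (hA : A ⊆ M.E) (S : Finset α) (hS : S ⊆ M.E)
    (h : ∀ e ∈ S, M.rk (insert e A) = M.rk A) : M.rk (A ∪ S) = M.rk A := by
  induction S using Finset.induction_on with
  | empty => simp
  | @insert a S ha ih =>
    have haE : a ∈ M.E := hS (mem_insert_self a S)
    have hSE : S ⊆ M.E := (subset_insert a S).trans hS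
    have hIH : M.rk (A ∪ S) = M.rk A := ih hSE (fun e he => h e (mem_insert_of_mem he))
    have hsub := M.rk_submod (A ∪ S) (insert a A) (union_subset hA hSE)
      (insert_subset haE hA)
    have e1 : (A ∪ S) ∪ insert a A = A ∪ insert a S := by
      ext x; simp only [mem_union, mem_insert]; tauto
    rw [e1] at hsub
    have hAsub : A ⊆ (A ∪ S) ∩ insert a A :=
      subset_inter subset_union_left (subset_insert a A)
    have h3 : M.rk A ≤ M.rk ((A ∪ S) ∩ insert a A) :=
      M.rk_mono A _ hAsub (inter_subset_right.trans (insert_subset haE hA))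
    have h4 : M.rk A ≤ M.rk (A ∪ insert a S) :=
      M.rk_mono A _ subset_union_left (union_subset hA (insert_subset haE hSE))
    have h5 : M.rk (insert a A) = M.rk A := h a (mem_insert_self a S)
    omega

lemma cl_subset_ground (A : Finset α) : M.cl A ⊆ M.E := filter_subset _ _

lemma subset_cl (A : Finset α) (hA : A ⊆ M.E) : A ⊆ M.cl A := by
  intro e he
  simp only [cl, mem_filter]
  exact ⟨hA he, by rw [insert_eq_self.mpr he]⟩

lemma rk_cl (A : Finset α) (hA : A ⊆ M.E) : M.rk (M.cl A) = M.rk A := by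
  have h := M.span_aux A hA (M.cl A) (M.cl_subset_ground A)
    (fun e he => (mem_filter.mp he).2)
  rwa [union_eq_right.mpr (M.subset_cl A hA)] at h

lemma cl_cl (A : Finset α) (hA : A ⊆ M.E) : M.cl (M.cl A) = M.cl A := by
  apply Subset.antisymm
  · intro e he
    simp only [cl, mem_filter] at he ⊢
    obtain ⟨heE, hr⟩ := (mem_filter (s := M.E)
      (p := fun e => M.rk (insert e (M.cl A)) = M.rk (M.cl A))).mp he
    refine ⟨heE, ?_⟩
    have h1 : M.rk (insert e A) ≤ M.rk (insert e (M.cl A)) :=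
      M.rk_mono _ _ (insert_subset_insert e (M.subset_cl A hA))
        (insert_subset heE (M.cl_subset_ground A))
    have h2 : M.rk A ≤ M.rk (insert e A) :=
      M.rk_mono _ _ (subset_insert e A) (insert_subset heE hA)
    have hr' : M.rk (insert e (M.cl A)) = M.rk (M.cl A) := hr
    rw [hr', M.rk_cl A hA] at h1
    omega
  · exact M.subset_cl (M.cl A) (M.cl_subset_ground A)

lemma indep_subset (A B : Finset α) (hAB : A ⊆ B) (hB : B ⊆ M.E)
    (h : M.rk B = B.card) : M.rk A = A.card := by
  have hAE : A ⊆ M.E := hAB.trans hB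
  have hsub := M.rk_submod A (B \ A) hAE ((sdiff_subset).trans hB)
  have e1 : A ∪ (B \ A) = B := union_sdiff_of_subset hAB
  have e2 : A ∩ (B \ A) = ∅ := by
    ext x; simp only [mem_inter, mem_sdiff, notMem_empty]; tauto
  rw [e1, e2, M.rk_empty] at hsub
  have h1 := M.rk_le_card A hAE
  have h2 := M.rk_le_card (B \ A) (sdiff_subset.trans hB)
  have h3 : (B \ A).card = B.card - A.card := card_sdiff_of_subset hAB
  have h4 : A.card ≤ B.card := card_le_card hAB
  omega

lemma exists_min_dep (A : Finset α) :
    A ⊆ M.E → M.rk A < A.card →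
      ∃ C, C ⊆ A ∧ M.rk C < C.card ∧ ∀ D ⊂ C, M.rk D = D.card := by
  induction A using Finset.strongInduction with
  | _ A ih =>
    intro hA h
    by_cases hall : ∀ D ⊂ A, M.rk D = D.card
    · exact ⟨A, Subset.rfl, h, hall⟩
    · push_neg at hall
      obtain ⟨D, hD, hDr⟩ := hall
      have hDE : D ⊆ M.E := hD.subset.trans hA
      have hDdep : M.rk D < D.card := lt_of_le_of_ne (M.rk_le_card D hDE) hDr
      obtain ⟨C, hC1, hC2⟩ := ih D hD hDE hDdep
      exact ⟨C, hC1.trans hD.subset, hC2⟩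

end FinMatroid


/-- For `Y ⊆ E` of full rank with `k = ρ(Y)`, the restriction `M|Y` is
uniform (`ρ(A) = min(|A|, k)` for all `A ⊆ Y`) iff either `Y` is a basis of `M`, or
`Y` is a cyclic set and `Z ∩ Y` is independent for every cyclic flat `Z` with
`ρ(Z) < k`. -/
theorem restriction_uniform_iff {α : Type*} [DecidableEq α] (M : FinMatroid α)
    (Y : Finset α) (hYE : Y ⊆ M.E) (hfull : M.rk Y = M.rk M.E) :
    (∀ A ⊆ Y, M.rk A = min A.card (M.rk Y)) ↔
      (M.rk Y = Y.card ∨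
        (M.IsCyclic Y ∧
          ∀ Z, M.IsCyclicFlat Z → M.rk Z < M.rk Y → M.rk (Z ∩ Y) = (Z ∩ Y).card)) := by
  constructor
  · intro H
    by_cases hcard : M.rk Y = Y.card
    · exact Or.inl hcard
    · right
      have hkY : M.rk Y ≤ Y.card := M.rk_le_card Y hYE
      have hlt : M.rk Y < Y.card := lt_of_le_of_ne hkY hcard
      constructor
      · refine ⟨hYE, ?_⟩
        apply Finset.filter_true_of_mem
        intro e he
        have hsub : Y.erase e ⊆ Y := erase_subset e Y
        have h1 := H (Y.erase e) hsub
        have hc : (Y.erase e).card = Y.card - 1 := card_erase_of_mem he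
        rw [h1, hc]
        omega
      · intro Z hZ hZlt
        have hZY : Z ∩ Y ⊆ Y := inter_subset_right
        have h1 := H (Z ∩ Y) hZY
        have h2 : M.rk (Z ∩ Y) ≤ M.rk Z :=
          M.rk_mono (Z ∩ Y) Z inter_subset_left hZ.1
        rw [h1] at h2 ⊢
        omega
  · rintro (hbasis | ⟨_, hcond⟩)
    · intro A hA
      have hAcard : M.rk A = A.card :=
        M.indep_subset A Y hA hYE hbasis
      have : A.card ≤ M.rk Y := by rw [hbasis]; exact card_le_card hA
      rw [hAcard]
      omega
    · intro A hA
      by_contra hne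
      have hAE : A ⊆ M.E := hA.trans hYE
      have h1 : M.rk A ≤ A.card := M.rk_le_card A hAE
      have h2 : M.rk A ≤ M.rk Y := M.rk_mono A Y hA hYE
      have hlt : M.rk A < min A.card (M.rk Y) :=
        lt_of_le_of_ne (le_min h1 h2) hne
      have hdep : M.rk A < A.card := lt_of_lt_of_le hlt (min_le_left _ _)
      have hrkA : M.rk A < M.rk Y := lt_of_lt_of_le hlt (min_le_right _ _)
      obtain ⟨C, hCA, hCdep, hCmin⟩ := M.exists_min_dep A hAE hdep
      have hCE : C ⊆ M.E := hCA.trans hAE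
      have hCY : C ⊆ Y := hCA.trans hA
      -- C is a minimal dependent set: rk C = |C| - 1, erase keeps rank
      have hCne : C ≠ ∅ := by
        intro h; rw [h, M.rk_empty] at hCdep; simp at hCdep
      have hCer : ∀ e ∈ C, M.rk (C.erase e) = M.rk C := by
        intro e he
        have h3 : C.erase e ⊂ C := erase_ssubset he
        have h4 := hCmin (C.erase e) h3
        have h5 : (C.erase e).card = C.card - 1 := card_erase_of_mem he
        have h6 : M.rk (C.erase e) ≤ M.rk C :=
          M.rk_mono _ _ (erase_subset e C) hCE
        omega
      set Z := M.cl C with hZdef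
      have hZE : Z ⊆ M.E := M.cl_subset_ground C
      have hCZ : C ⊆ Z := M.subset_cl C hCE
      have hrkZ : M.rk Z = M.rk C := M.rk_cl C hCE
      have hZflat : M.cl Z = Z := M.cl_cl C hCE
      have hZcyc : M.cyc Z = Z := by
        apply Finset.filter_true_of_mem
        intro e he
        have hle : M.rk (Z.erase e) ≤ M.rk Z :=
          M.rk_mono _ _ (erase_subset e Z) hZE
        have hge : M.rk C ≤ M.rk (Z.erase e) := by
          by_cases heC : e ∈ C
          · have h7 : C.erase e ⊆ Z.erase e := erase_subset_erase e hCZ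
            have h8 := M.rk_mono (C.erase e) (Z.erase e) h7
              ((erase_subset e Z).trans hZE)
            rw [hCer e heC] at h8
            exact h8
          · have h7 : C ⊆ Z.erase e := subset_erase.mpr ⟨hCZ, heC⟩
            exact M.rk_mono C (Z.erase e) h7 ((erase_subset e Z).trans hZE)
        omega
      have hZlt : M.rk Z < M.rk Y := by
        have : M.rk C ≤ M.rk A := M.rk_mono C A hCA hAE
        omega
      have hind := hcond Z ⟨hZE, hZflat, hZcyc⟩ hZlt
      have hCsub : C ⊆ Z ∩ Y := subset_inter hCZ hCY
      have : M.rk C = C.card :=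
        M.indep_subset C (Z ∩ Y) hCsub (inter_subset_right.trans hYE) hind
      omega
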